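/- arXiv:2308.06785 — 4 statements merged into one kernel-verified Lean document; each statement's English description precedes it below -/
import Mathlib

section
/- Let x₀ ∈ ℝ, v ≥ 0, a ≥ 0, τ ≥ 0, b > 0 and c ∈ ℝ, and let atb : ℝ → ℝ be the accelerate-then-brake trajectory with data (x₀, v, a, τ, b). Then (∀ t ≥ 0, atb(t) < c) if and only if x₀ + v·τ + (a/2)·τ² + (v + a·τ)²/(2b) < c. In particular, a vehicle that cruises at speed v for the response time ρ and then brakes at rate b (the case a = 0, τ = ρ) stays strictly before an obstacle or collision-zone boundary at position c at all times if and only if x₀ + v·ρ + v²/(2b) < c. -/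
/-- The accelerate-then-brake trajectory: position at time `t` of a vehicle
starting at `x₀` with speed `v`, accelerating at rate `a` for time `τ`,
then braking at rate `b` until stopped, remaining stopped afterwards. -/
noncomputable def atb (x₀ v a τ b : ℝ) (t : ℝ) : ℝ :=
  if t ≤ τ then x₀ + v * t + (a / 2) * t ^ 2
  else if t ≤ τ + (v + a * τ) / b then
    (x₀ + v * τ + (a / 2) * τ ^ 2) + (v + a * τ) * (t - τ) - (b / 2) * (t - τ) ^ 2
  else (x₀ + v * τ + (a / 2) * τ ^ 2) + (v + a * τ) ^ 2 / (2 * b)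

theorem atb_lt_iff_worst_case_stop_lt (x₀ v a τ b c : ℝ)
    (hv : 0 ≤ v) (ha : 0 ≤ a) (hτ : 0 ≤ τ) (hb : 0 < b) :
    (∀ t : ℝ, 0 ≤ t → atb x₀ v a τ b t < c) ↔
      x₀ + v * τ + (a / 2) * τ ^ 2 + (v + a * τ) ^ 2 / (2 * b) < c := by
  have hv1 : 0 ≤ v + a * τ := by positivity
  have hq : 0 ≤ (v + a * τ) / b := div_nonneg hv1 hb.le
  constructor
  · intro h
    have ht : ¬ (τ + (v + a * τ) / b + 1 ≤ τ) := by linarith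
    have ht2 : ¬ (τ + (v + a * τ) / b + 1 ≤ τ + (v + a * τ) / b) := by linarith
    have := h (τ + (v + a * τ) / b + 1) (by linarith)
    simpa [atb, ht, ht2] using this
  · intro h t ht
    unfold atb
    split_ifs with h1 h2
    · have h3 : 0 ≤ (v + a * τ) ^ 2 / (2 * b) := by positivity
      nlinarith [mul_nonneg hv (sub_nonneg.2 h1), mul_nonneg ha (mul_nonneg (by linarith : (0:ℝ) ≤ τ - t) (by linarith : (0:ℝ) ≤ τ + t))]
    · have : (v + a * τ) * (t - τ) - (b / 2) * (t - τ) ^ 2 ≤ (v + a * τ) ^ 2 / (2 * b) := by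
        rw [le_div_iff₀ (by linarith : (0:ℝ) < 2 * b)]
        nlinarith [sq_nonneg (b * (t - τ) - (v + a * τ))]
      linarith
    · exact h
end

section
/- Let b > 0 and v ≥ 0, and let w : ℝ → ℝ be differentiable on [0,∞) with w(0) = v, w(t) ≥ 0 for every t ≥ 0, and w′(t) ≥ −b for every t ≥ 0 at which w(t) > 0. Then for every t with 0 ≤ t ≤ v/b one has w(t) ≥ v − b·t. -/
theorem velocity_ge_uniform_braking (b v : ℝ) (hb : 0 < b) (hv : 0 ≤ v)
    (w : ℝ → ℝ)
    (hdiff : ∀ t : ℝ, 0 ≤ t → DifferentiableAt ℝ w t)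
    (hw0 : w 0 = v)
    (hnonneg : ∀ t : ℝ, 0 ≤ t → 0 ≤ w t)
    (hderiv : ∀ t : ℝ, 0 ≤ t → 0 < w t → -b ≤ deriv w t) :
    ∀ t : ℝ, 0 ≤ t → t ≤ v / b → v - b * t ≤ w t := by
  intro t ht _
  set f : ℝ → ℝ := fun u => w u + b * u with hf
  have hderivf : ∀ u : ℝ, 0 < u → 0 ≤ deriv f u := by
    intro u hu
    have hdw : DifferentiableAt ℝ w u := hdiff u hu.le
    have hdf : deriv f u = deriv w u + b := by
      rw [hf]
      rw [deriv_fun_add hdw (by fun_prop)]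
      have : deriv (fun x : ℝ => b * x) u = b := by
        have h : HasDerivAt (fun x : ℝ => b * x) b u := by
          simpa using (hasDerivAt_id u).const_mul b
        exact h.deriv
      rw [show (HMul.hMul b : ℝ → ℝ) = fun x : ℝ => b * x from rfl] at *
      rw [this]
    rw [hdf]
    rcases lt_or_eq_of_le (hnonneg u hu.le) with hpos | heq
    · linarith [hderiv u hu.le hpos]
    · have hmin : IsLocalMin w u := by
        filter_upwards [Ioi_mem_nhds hu] with x hx
        rw [← heq]
        exact hnonneg x (le_of_lt hx)
      have := hmin.deriv_eq_zero
      linarith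
  have hmono : MonotoneOn f (Set.Ici 0) := by
    apply monotoneOn_of_deriv_nonneg (convex_Ici 0)
    · apply ContinuousOn.add
      · exact fun u hu => (hdiff u hu).continuousAt.continuousWithinAt
      · fun_prop
    · intro u hu
      rw [interior_Ici] at hu
      exact ((hdiff u hu.le).add (by fun_prop)).differentiableWithinAt
    · intro u hu
      rw [interior_Ici] at hu
      exact hderivf u hu
  have := hmono (Set.self_mem_Ici) (Set.mem_Ici.mpr ht) ht
  simp only [hf, hw0] at this
  linarith
end

section
/- Let x₀ ∈ ℝ, v ≥ 0, a ≥ 0, ρ ≥ 0 and b > 0, and let x, w : ℝ → ℝ be such that x(0) = x₀, w(0) = v, for every t ≥ 0 the function x has derivative w(t) at t, w is differentiable on [0,∞), w(t) ≥ 0 for every t ≥ 0, w′(t) ≤ a for every t ∈ [0, ρ], and w′(t) ≤ −b for every t > ρ at which w(t) > 0. Then for every t ≥ 0, x(t) ≤ atb(t), where atb is the accelerate-then-brake trajectory with data (x₀, v, a, ρ, b). -/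
theorem position_le_accel_then_brake (x₀ v a ρ b : ℝ)
    (hv : 0 ≤ v) (ha : 0 ≤ a) (hρ : 0 ≤ ρ) (hb : 0 < b)
    (x w : ℝ → ℝ)
    (hx0 : x 0 = x₀) (hw0 : w 0 = v)
    (hx : ∀ t : ℝ, 0 ≤ t → HasDerivAt x (w t) t)
    (hdiff : ∀ t : ℝ, 0 ≤ t → DifferentiableAt ℝ w t)
    (hnonneg : ∀ t : ℝ, 0 ≤ t → 0 ≤ w t)
    (hderiv₁ : ∀ t : ℝ, 0 ≤ t → t ≤ ρ → deriv w t ≤ a)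
    (hderiv₂ : ∀ t : ℝ, ρ < t → 0 < w t → deriv w t ≤ -b) :
    ∀ t : ℝ, 0 ≤ t → x t ≤ atb x₀ v a ρ b t := by
  have hv₁0 : 0 ≤ v + a * ρ := by positivity
  have hρT : ρ ≤ ρ + (v + a * ρ) / b := le_add_of_nonneg_right (div_nonneg hv₁0 hb.le)
  have hwcont : ∀ u : ℝ, 0 ≤ u → ContinuousAt w u := fun u hu => (hdiff u hu).continuousAt
  -- Lemma A : speed bound during acceleration phase
  have hA : ∀ s : ℝ, 0 ≤ s → s ≤ ρ → w s ≤ v + a * s := by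
    intro s hs0 hsρ
    have hmono : MonotoneOn (fun u => v + a * u - w u) (Set.Icc 0 ρ) := by
      apply monotoneOn_of_deriv_nonneg (convex_Icc 0 ρ)
      · apply ContinuousOn.sub
        · fun_prop
        · exact fun u hu => (hwcont u hu.1).continuousWithinAt
      · rw [interior_Icc]
        intro u hu
        exact ((((hasDerivAt_id u).const_mul a).const_add v).sub
          (hdiff u hu.1.le).hasDerivAt).differentiableAt.differentiableWithinAt
      · rw [interior_Icc]
        intro u hu
        have h1 : HasDerivAt (fun u : ℝ => v + a * u) a u := by
          simpa using ((hasDerivAt_id u).const_mul a).const_add v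
        rw [show deriv (fun u => v + a * u - w u) u = _ from (h1.sub (hdiff u hu.1.le).hasDerivAt).deriv]
        linarith [hderiv₁ u hu.1.le hu.2.le]
    have := hmono (Set.mem_Icc.mpr ⟨le_refl 0, hρ⟩) (Set.mem_Icc.mpr ⟨hs0, hsρ⟩) hs0
    simp only [mul_zero, add_zero, hw0] at this
    linarith
  -- braking lemma
  have hbr : ∀ s t' : ℝ, ρ ≤ s → s < t' → (∀ u, s < u → u < t' → 0 < w u) →
      w t' ≤ w s - b * (t' - s) := by
    intro s t' hs hst hpos'
    have hmono : MonotoneOn (fun u => w s - b * (u - s) - w u) (Set.Icc s t') := by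
      apply monotoneOn_of_deriv_nonneg (convex_Icc s t')
      · apply ContinuousOn.sub
        · fun_prop
        · exact fun u hu => (hwcont u ((hρ.trans hs).trans hu.1)).continuousWithinAt
      · rw [interior_Icc]
        intro u hu
        exact (((((hasDerivAt_id u).sub_const s).const_mul b).const_sub (w s)).sub
          (hdiff u ((hρ.trans hs).trans hu.1.le)).hasDerivAt).differentiableAt.differentiableWithinAt
      · rw [interior_Icc]
        intro u hu
        have h1 : HasDerivAt (fun u : ℝ => w s - b * (u - s)) (-b) u := by
          simpa using (((hasDerivAt_id u).sub_const s).const_mul b).const_sub (w s)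
        rw [show deriv (fun u => w s - b * (u - s) - w u) u = _ from (h1.sub (hdiff u ((hρ.trans hs).trans hu.1.le)).hasDerivAt).deriv]
        have := hderiv₂ u (lt_of_le_of_lt hs hu.1) (hpos' u hu.1 hu.2)
        linarith
    have := hmono (Set.mem_Icc.mpr ⟨le_refl s, hst.le⟩) (Set.mem_Icc.mpr ⟨hst.le, le_refl t'⟩) hst.le
    simp only [sub_self, mul_zero, sub_zero] at this
    linarith
  -- positivity persists backwards
  have hpos : ∀ t' : ℝ, ρ < t' → 0 < w t' → ∀ u, ρ ≤ u → u ≤ t' → 0 < w u := by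
    intro t' ht' hwt u hu1 hu2
    by_contra hcon
    push_neg at hcon
    have hwu : w u = 0 := le_antisymm hcon (hnonneg u (hρ.trans hu1))
    set S : Set ℝ := Set.Icc ρ t' ∩ w ⁻¹' {0} with hSdef
    have hSc : IsClosed S := by
      apply ContinuousOn.preimage_isClosed_of_isClosed _ isClosed_Icc isClosed_singleton
      exact fun z hz => (hwcont z (hρ.trans hz.1)).continuousWithinAt
    have hSne : S.Nonempty := ⟨u, ⟨hu1, hu2⟩, hwu⟩
    have hSbdd : BddAbove S := ⟨t', fun z hz => hz.1.2⟩
    obtain ⟨⟨hs1, hs2⟩, hs3⟩ := hSc.csSup_mem hSne hSbdd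
    have hwz : w (sSup S) = 0 := hs3
    have hs't : sSup S < t' := lt_of_le_of_ne hs2 (by intro h; rw [h] at hwz; linarith)
    have hub : ∀ z, sSup S < z → z < t' → 0 < w z := by
      intro z hz1 hz2
      rcases (hnonneg z (hρ.trans (hs1.trans hz1.le))).lt_or_eq with h | h
      · exact h
      · exact absurd (le_csSup hSbdd ⟨⟨hs1.trans hz1.le, hz2.le⟩, h.symm⟩) (not_le.mpr hz1)
    have := hbr (sSup S) t' hs1 hs't hub
    rw [hwz] at this
    nlinarith [mul_pos hb (sub_pos.mpr hs't)]
  -- Lemma B : speed bound during braking phase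
  have hB : ∀ t' : ℝ, ρ < t' → 0 < w t' → w t' ≤ (v + a * ρ) - b * (t' - ρ) := by
    intro t' ht' hwt
    have h1 := hbr ρ t' le_rfl ht' (fun u h1 h2 => hpos t' ht' hwt u h1.le h2.le)
    have h2 := hA ρ hρ le_rfl
    linarith
  -- after the stopping time the speed is zero
  have hstop : ∀ t' : ℝ, ρ + (v + a * ρ) / b < t' → w t' = 0 := by
    intro t' ht'
    by_contra h
    have hwt : 0 < w t' := (hnonneg t' ((hρ.trans hρT).trans ht'.le)).lt_of_ne (Ne.symm h)
    have ht'ρ : ρ < t' := lt_of_le_of_lt hρT ht'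
    have h1 := hB t' ht'ρ hwt
    have h2 : b * ((v + a * ρ) / b) = v + a * ρ := by field_simp
    nlinarith [mul_pos hb (sub_pos.mpr ht')]
  -- explicit formulas for atb on the three phases
  have hatb1 : ∀ s : ℝ, s ≤ ρ → atb x₀ v a ρ b s = x₀ + v * s + a / 2 * s ^ 2 :=
    fun s hs => if_pos hs
  have hatb2 : ∀ s : ℝ, ρ ≤ s → s ≤ ρ + (v + a * ρ) / b →
      atb x₀ v a ρ b s =
        (x₀ + v * ρ + a / 2 * ρ ^ 2) + (v + a * ρ) * (s - ρ) - b / 2 * (s - ρ) ^ 2 := by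
    intro s h1 h2
    rcases eq_or_lt_of_le h1 with h | h
    · rw [← h, atb, if_pos le_rfl]; ring
    · rw [atb, if_neg (not_le.mpr h), if_pos h2]
  have hatb3 : ∀ s : ℝ, ρ + (v + a * ρ) / b ≤ s →
      atb x₀ v a ρ b s = (x₀ + v * ρ + a / 2 * ρ ^ 2) + (v + a * ρ) ^ 2 / (2 * b) := by
    intro s hs
    by_cases h1 : s ≤ ρ
    · have hv10 : v + a * ρ = 0 := by
        have hd : (v + a * ρ) / b ≤ 0 := by linarith [hs.trans h1]
        have h' := mul_le_mul_of_nonneg_right hd hb.le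
        rw [div_mul_cancel₀ _ hb.ne', zero_mul] at h'
        exact le_antisymm h' hv₁0
      have hsρ : s = ρ := le_antisymm h1 (le_trans hρT hs)
      rw [atb, if_pos h1, hsρ, hv10]
      ring
    · push_neg at h1
      by_cases h2 : s ≤ ρ + (v + a * ρ) / b
      · have hsT : s = ρ + (v + a * ρ) / b := le_antisymm h2 hs
        rw [atb, if_neg (not_le.mpr h1), if_pos h2, hsT]
        field_simp
        ring
      · rw [atb, if_neg (not_le.mpr h1), if_neg h2]
  -- derivatives of atb on the open phases
  have hd1 : ∀ s : ℝ, s < ρ → HasDerivAt (atb x₀ v a ρ b) (v + a * s) s := by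
    intro s hs
    have hq : HasDerivAt (fun u : ℝ => x₀ + v * u + a / 2 * u ^ 2) (v + a * s) s := by
      have h1 := (((hasDerivAt_id s).const_mul v).const_add x₀).add
        ((hasDerivAt_pow 2 s).const_mul (a / 2))
      refine h1.congr_deriv ?_
      push_cast
      ring
    exact hq.congr_of_eventuallyEq
      (Filter.eventuallyEq_of_mem (Iio_mem_nhds hs) (fun u hu => hatb1 u (le_of_lt hu)))
  have hd2 : ∀ s : ℝ, ρ < s → s < ρ + (v + a * ρ) / b →
      HasDerivAt (atb x₀ v a ρ b) ((v + a * ρ) - b * (s - ρ)) s := by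
    intro s hs1 hs2
    have hq : HasDerivAt (fun u : ℝ =>
        (x₀ + v * ρ + a / 2 * ρ ^ 2) + (v + a * ρ) * (u - ρ) - b / 2 * (u - ρ) ^ 2)
        ((v + a * ρ) - b * (s - ρ)) s := by
      have h1 := ((((hasDerivAt_id s).sub_const ρ).const_mul (v + a * ρ)).const_add
        (x₀ + v * ρ + a / 2 * ρ ^ 2)).sub
        ((((hasDerivAt_id s).sub_const ρ).pow 2).const_mul (b / 2))
      refine h1.congr_deriv ?_
      simp only [id_eq]
      push_cast
      ring
    exact hq.congr_of_eventuallyEq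
      (Filter.eventuallyEq_of_mem (Ioo_mem_nhds hs1 hs2)
        (fun u hu => hatb2 u hu.1.le hu.2.le))
  have hd3 : ∀ s : ℝ, ρ + (v + a * ρ) / b < s → HasDerivAt (atb x₀ v a ρ b) 0 s := by
    intro s hs
    exact (hasDerivAt_const s _).congr_of_eventuallyEq
      (Filter.eventuallyEq_of_mem (Ioi_mem_nhds hs) (fun u hu => hatb3 u (le_of_lt hu)))
  -- the gap function is monotone on each phase
  have m1 : MonotoneOn (fun s => atb x₀ v a ρ b s - x s) (Set.Icc 0 ρ) := by
    apply monotoneOn_of_deriv_nonneg (convex_Icc 0 ρ)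
    · apply ContinuousOn.sub
      · exact ContinuousOn.congr (by fun_prop) (fun u hu => hatb1 u hu.2)
      · exact fun u hu => ((hx u hu.1).continuousAt).continuousWithinAt
    · rw [interior_Icc]
      intro u hu
      exact ((hd1 u hu.2).sub (hx u hu.1.le)).differentiableAt.differentiableWithinAt
    · rw [interior_Icc]
      intro u hu
      rw [show deriv (fun s => atb x₀ v a ρ b s - x s) u = _ from ((hd1 u hu.2).sub (hx u hu.1.le)).deriv]
      linarith [hA u hu.1.le hu.2.le]
  have m2 : MonotoneOn (fun s => atb x₀ v a ρ b s - x s) (Set.Icc ρ (ρ + (v + a * ρ) / b)) := by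
    apply monotoneOn_of_deriv_nonneg (convex_Icc _ _)
    · apply ContinuousOn.sub
      · exact ContinuousOn.congr (by fun_prop) (fun u hu => hatb2 u hu.1 hu.2)
      · exact fun u hu => ((hx u (hρ.trans hu.1)).continuousAt).continuousWithinAt
    · rw [interior_Icc]
      intro u hu
      exact ((hd2 u hu.1 hu.2).sub (hx u (hρ.trans hu.1.le))).differentiableAt.differentiableWithinAt
    · rw [interior_Icc]
      intro u hu
      rw [show deriv (fun s => atb x₀ v a ρ b s - x s) u = _ from ((hd2 u hu.1 hu.2).sub (hx u (hρ.trans hu.1.le))).deriv]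
      have hwle : w u ≤ (v + a * ρ) - b * (u - ρ) := by
        rcases (hnonneg u (hρ.trans hu.1.le)).lt_or_eq with h | h
        · exact hB u hu.1 h
        · rw [← h]
          have : b * (u - ρ) < b * ((v + a * ρ) / b) := by
            apply mul_lt_mul_of_pos_left _ hb
            linarith [hu.2]
          rw [mul_div_cancel₀ _ hb.ne'] at this
          linarith
      linarith
  have m3 : MonotoneOn (fun s => atb x₀ v a ρ b s - x s) (Set.Ici (ρ + (v + a * ρ) / b)) := by
    apply monotoneOn_of_deriv_nonneg (convex_Ici _)
    · apply ContinuousOn.sub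
      · exact ContinuousOn.congr continuousOn_const (fun u hu => hatb3 u hu)
      · exact fun u hu => ((hx u ((hρ.trans hρT).trans hu)).continuousAt).continuousWithinAt
    · rw [interior_Ici]
      intro u hu
      exact ((hd3 u hu).sub (hx u ((hρ.trans hρT).trans (le_of_lt hu)))).differentiableAt.differentiableWithinAt
    · rw [interior_Ici]
      intro u hu
      rw [show deriv (fun s => atb x₀ v a ρ b s - x s) u = _ from ((hd3 u hu).sub (hx u ((hρ.trans hρT).trans (le_of_lt hu)))).deriv]
      rw [hstop u hu]
      linarith
  -- conclusion
  intro t ht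
  have hg0 : atb x₀ v a ρ b 0 - x 0 = 0 := by
    rw [hatb1 0 hρ, hx0]; ring
  rcases le_or_gt t ρ with h | h
  · have := m1 (Set.mem_Icc.mpr ⟨le_refl 0, hρ⟩) (Set.mem_Icc.mpr ⟨ht, h⟩) ht
    simp only at this
    linarith
  · have h1 := m1 (Set.mem_Icc.mpr ⟨le_refl 0, hρ⟩) (Set.mem_Icc.mpr ⟨hρ, le_refl ρ⟩) hρ
    rcases le_or_gt t (ρ + (v + a * ρ) / b) with h2 | h2
    · have := m2 (Set.mem_Icc.mpr ⟨le_refl ρ, hρT⟩) (Set.mem_Icc.mpr ⟨h.le, h2⟩) h.le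
      simp only at this h1
      linarith
    · have h3 := m2 (Set.mem_Icc.mpr ⟨le_refl ρ, hρT⟩) (Set.mem_Icc.mpr ⟨hρT, le_refl _⟩) hρT
      have h4 := m3 (Set.mem_Ici.mpr le_rfl) (Set.mem_Ici.mpr h2.le) h2.le
      simp only at h1 h3 h4
      linarith
end

section
/- Let x₀ ∈ ℝ, v ≥ 0, a ≥ 0, τ ≥ 0, b > 0, and let atb be the accelerate-then-brake trajectory with data (x₀, v, a, τ, b). If c > x₀ + v·τ + (a/2)·τ² + (v + a·τ)²/(2b) is NOT satisfied — i.e., if x₀ + v·τ + (a/2)·τ² + (v + a·τ)²/(2b) ≥ c — then there exists t ≥ 0 with atb(t) ≥ c. Conversely, if x₀ + v·τ + (a/2)·τ² + (v + a·τ)²/(2b) < c then atb(t) < c for all t ≥ 0. Hence the condition 'worst-case stopping position before c' is both sufficient and necessary for the accelerate-then-brake maneuver to keep the vehicle strictly before position c at all times. -/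
theorem atb_worst_case_condition_exact (x₀ v a τ b c : ℝ)
    (hv : 0 ≤ v) (ha : 0 ≤ a) (hτ : 0 ≤ τ) (hb : 0 < b) :
    ((x₀ + v * τ + (a / 2) * τ ^ 2 + (v + a * τ) ^ 2 / (2 * b) ≥ c) →
      ∃ t : ℝ, 0 ≤ t ∧ atb x₀ v a τ b t ≥ c) ∧
    ((x₀ + v * τ + (a / 2) * τ ^ 2 + (v + a * τ) ^ 2 / (2 * b) < c) →
      ∀ t : ℝ, 0 ≤ t → atb x₀ v a τ b t < c) := by
  have hv1 : 0 ≤ v + a * τ := by positivity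
  have hvb : 0 ≤ (v + a * τ) / b := by positivity
  have hb' : b ≠ 0 := ne_of_gt hb
  constructor
  · intro hc
    refine ⟨τ + (v + a * τ) / b, by linarith, ?_⟩
    unfold atb
    by_cases h1 : τ + (v + a * τ) / b ≤ τ
    · have h2 : (v + a * τ) / b = 0 := le_antisymm (by linarith) hvb
      have h3 : v + a * τ = 0 := by field_simp at h2; linarith
      rw [if_pos h1, h2]
      rw [h3] at hc
      ring_nf at hc ⊢
      linarith
    · rw [if_neg h1, if_pos le_rfl]
      have heq : τ + (v + a * τ) / b - τ = (v + a * τ) / b := by ring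
      rw [heq]
      have : (v + a * τ) * ((v + a * τ) / b) - b / 2 * ((v + a * τ) / b) ^ 2
          = (v + a * τ) ^ 2 / (2 * b) := by field_simp; ring
      linarith
  · intro hc t ht
    unfold atb
    have hnn : 0 ≤ (v + a * τ) ^ 2 / (2 * b) := by positivity
    split_ifs with h1 h2
    · nlinarith [mul_le_mul_of_nonneg_left h1 hv,
        mul_le_mul_of_nonneg_left (pow_le_pow_left₀ ht h1 2) ha]
    · have key : (v + a * τ) * (t - τ) - (b / 2) * (t - τ) ^ 2
          ≤ (v + a * τ) ^ 2 / (2 * b) := by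
        rw [le_div_iff₀ (by positivity : (0:ℝ) < 2 * b)]
        nlinarith [sq_nonneg ((t - τ) * b - (v + a * τ))]
      linarith
    · exact hc
end
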